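/- Consider the Wolbachia mosquito ODE system. Assume λ : [0,∞) → ℝ is continuous and strictly monotone decreasing with λ(F_tot) → λ_min > 0 as F_tot → ∞, λ(0) > min{μ_f, μ_fw} and λ_min < min{μ_f, μ_fw}. Then every global solution (M, F, M_w, F_w) on [0,∞) with nonnegative components and with total population N(t) = M(t)+F(t)+M_w(t)+F_w(t) > 0 for all t is bounded; moreover limsup_{t→∞} (F(t)+F_w(t)) ≤ F̄, where F̄ is the unique value with λ(F̄) = min{μ_f, μ_fw}, and M(t)+M_w(t) is bounded on [0,∞). -/

import Mathlib

/-!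
STATEMENT 0: Positivity/boundedness theorem for the sex-structured Wolbachia
mosquito model.  Under the stated assumptions on the egg-laying rate `lam`,
every global nonnegative solution of the system is bounded, and
`limsup (F + F_w) ≤ F̄` where `F̄` is the unique value with
`lam F̄ = min {μ_f, μ_fw}`; also `M + M_w` is bounded.
-/

open Filter Set

lemma barrier_lemma {g g' : ℝ → ℝ} {a K : ℝ}
    (hg : ∀ t ≥ a, HasDerivAt g (g' t) t)
    (hK : g a ≤ K)
    (hd : ∀ t ≥ a, K < g t → g' t ≤ 0) :
    ∀ t ≥ a, g t ≤ K := by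
  intro t ht
  have key : ∀ ε : ℝ, 0 < ε → g t ≤ K + ε := by
    intro ε hε
    have hta : (0:ℝ) < 1 + (t - a) := by linarith
    set δ := ε / (1 + (t - a)) with hδdef
    have hδ : 0 < δ := div_pos hε hta
    have hcont : ContinuousOn g (Icc a t) := fun x hx =>
      ((hg x hx.1).continuousAt).continuousWithinAt
    have hder : ∀ x ∈ Ico a t, HasDerivWithinAt g (g' x) (Ici x) x := fun x hx =>
      (hg x hx.1).hasDerivWithinAt
    have hB : ∀ x : ℝ, HasDerivAt (fun s => K + δ + δ * (s - a)) δ x := by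
      intro x
      have := (((hasDerivAt_id x).sub_const a).const_mul δ).const_add (K + δ)
      simpa using this
    have hle := image_le_of_deriv_right_lt_deriv_boundary (f := g) (f' := g')
      (B := fun s => K + δ + δ * (s - a)) (B' := fun _ => δ)
      hcont hder (by simp; nlinarith) hB ?_ (right_mem_Icc.2 ht)
    · have hδε : δ * (1 + (t - a)) = ε := by rw [hδdef]; field_simp
      calc g t ≤ K + δ + δ * (t - a) := hle
        _ = K + δ * (1 + (t - a)) := by ring
        _ = K + ε := by rw [hδε]
    · intro x hx hgx
      have hKx : K < g x := by
        have hgx' : g x = K + δ + δ * (x - a) := hgx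
        nlinarith [mul_nonneg hδ.le (sub_nonneg.2 hx.1)]
      exact lt_of_le_of_lt (hd x hx.1 hKx) hδ
  exact le_of_forall_pos_le_add key

lemma decay_lemma {g g' : ℝ → ℝ} {a c : ℝ}
    (hg : ∀ t ≥ a, HasDerivAt g (g' t) t)
    (hd : ∀ t ≥ a, g' t ≤ -c) :
    ∀ b ≥ a, g b ≤ g a - c * (b - a) := by
  intro b hb
  have hcont : ContinuousOn g (Icc a b) := fun x hx =>
    ((hg x hx.1).continuousAt).continuousWithinAt
  have hder : ∀ x ∈ Ico a b, HasDerivWithinAt g (g' x) (Ici x) x := fun x hx =>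
    (hg x hx.1).hasDerivWithinAt
  have hB : ∀ x : ℝ, HasDerivAt (fun s => g a - c * (s - a)) (-c) x := by
    intro x
    have := (((hasDerivAt_id x).sub_const a).const_mul c).const_sub (g a)
    simpa using this
  have hle := image_le_of_deriv_right_le_deriv_boundary (f := g) (f' := g')
    (B := fun s => g a - c * (s - a)) (B' := fun _ => -c)
    hcont hder (by simp) (fun x _ => (hB x).continuousAt.continuousWithinAt)
    (fun x _ => (hB x).hasDerivWithinAt) (fun x hx => hd x hx.1) (right_mem_Icc.2 hb)
  simpa using hle

set_option maxHeartbeats 2000000 in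
theorem wolbachia_solutions_bounded
    (μm μf μmw μfw β τ q γ lamMin : ℝ)
    (hμm : 0 < μm) (hμf : 0 < μf) (hμmw : 0 < μmw) (hμfw : 0 < μfw)
    (hβ : β ∈ Set.Icc (0 : ℝ) 1) (hτ : τ ∈ Set.Icc (0 : ℝ) 1)
    (hq : q ∈ Set.Icc (0 : ℝ) 1) (hγ : γ ∈ Set.Icc (0 : ℝ) 1)
    (lam : ℝ → ℝ)
    (hcont : ContinuousOn lam (Set.Ici 0))
    (hanti : StrictAntiOn lam (Set.Ici 0))
    (hlim : Filter.Tendsto lam Filter.atTop (nhds lamMin))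
    (hlamMinpos : 0 < lamMin)
    (hlam0 : min μf μfw < lam 0)
    (hlamMin : lamMin < min μf μfw)
    (M F Mw Fw : ℝ → ℝ)
    (hnonneg : ∀ t ≥ (0 : ℝ), 0 ≤ M t ∧ 0 ≤ F t ∧ 0 ≤ Mw t ∧ 0 ≤ Fw t)
    (hN : ∀ t ≥ (0 : ℝ), 0 < M t + F t + Mw t + Fw t)
    (hM : ∀ t ≥ (0 : ℝ), HasDerivAt M
      (-μm * M t + lam (F t + Fw t) / (M t + F t + Mw t + Fw t) *
        (M t * F t + (1 - β) * (1 - τ) * (M t * Fw t + Mw t * Fw t) +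
          (1 - q) * (Mw t * F t))) t)
    (hF : ∀ t ≥ (0 : ℝ), HasDerivAt F
      (-μf * F t + lam (F t + Fw t) / (M t + F t + Mw t + Fw t) *
        (M t * F t + (1 - β) * (1 - τ) * (M t * Fw t + Mw t * Fw t) +
          (1 - q) * (Mw t * F t))) t)
    (hMw : ∀ t ≥ (0 : ℝ), HasDerivAt Mw
      (-μmw * Mw t + lam (F t + Fw t) / (M t + F t + Mw t + Fw t) *
        ((1 - β) * τ * (1 - γ) * (M t * Fw t + Mw t * Fw t))) t)
    (hFw : ∀ t ≥ (0 : ℝ), HasDerivAt Fw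
      (-μfw * Fw t + lam (F t + Fw t) / (M t + F t + Mw t + Fw t) *
        ((1 - β) * τ * (M t * Fw t + Mw t * Fw t))) t) :
    (∃ C : ℝ, ∀ t ≥ (0 : ℝ), M t + F t + Mw t + Fw t ≤ C) ∧
    (∃! Fbar : ℝ, 0 ≤ Fbar ∧ lam Fbar = min μf μfw) ∧
    (∀ Fbar : ℝ, 0 ≤ Fbar → lam Fbar = min μf μfw →
      Filter.limsup (fun t => F t + Fw t) Filter.atTop ≤ Fbar) ∧
    (∃ C : ℝ, ∀ t ≥ (0 : ℝ), M t + Mw t ≤ C) := by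
  set μ : ℝ := min μf μfw with hμdef
  have hμpos : 0 < μ := lt_min hμf hμfw
  set μ' : ℝ := min μm μmw with hμ'def
  have hμ'pos : 0 < μ' := lt_min hμm hμmw
  have hmono : AntitoneOn lam (Ici 0) := hanti.antitoneOn
  -- lamMin is a lower bound for lam on [0, ∞)
  have hlamlb : ∀ x : ℝ, 0 ≤ x → lamMin ≤ lam x := by
    intro x hx
    refine le_of_tendsto hlim ?_
    filter_upwards [eventually_ge_atTop x] with y hy
    exact hmono hx (le_trans hx hy) hy
  have hlampos : ∀ x : ℝ, 0 ≤ x → 0 < lam x := fun x hx =>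
    hlamMinpos.trans_le (hlamlb x hx)
  -- existence and uniqueness of Fbar
  obtain ⟨T, hTlt, hT0⟩ := ((hlim.eventually_lt_const hlamMin).and
    (eventually_ge_atTop (0 : ℝ))).exists
  obtain ⟨Fbar, hFbarmem, hFbarval⟩ :=
    intermediate_value_Icc' hT0 (hcont.mono Icc_subset_Ici_self)
      (⟨hTlt.le, hlam0.le⟩ : μ ∈ Icc (lam T) (lam 0))
  have hFbar0 : 0 ≤ Fbar := hFbarmem.1
  have hUnique : ∃! Fb : ℝ, 0 ≤ Fb ∧ lam Fb = μ := by
    refine ⟨Fbar, ⟨hFbar0, hFbarval⟩, fun y hy => ?_⟩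
    exact hanti.injOn hy.1 hFbar0 (hy.2.trans hFbarval.symm)
  -- derivative of G = F + Fw
  set g'fun : ℝ → ℝ := fun t =>
    (-μf * F t + lam (F t + Fw t) / (M t + F t + Mw t + Fw t) *
        (M t * F t + (1 - β) * (1 - τ) * (M t * Fw t + Mw t * Fw t) +
          (1 - q) * (Mw t * F t))) +
    (-μfw * Fw t + lam (F t + Fw t) / (M t + F t + Mw t + Fw t) *
        ((1 - β) * τ * (M t * Fw t + Mw t * Fw t))) with hg'def
  have hGd : ∀ t ≥ (0:ℝ), HasDerivAt (fun s => F s + Fw s) (g'fun t) t :=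
    fun t ht => (hF t ht).add (hFw t ht)
  have hGnonneg : ∀ t ≥ (0:ℝ), 0 ≤ F t + Fw t := by
    intro t ht; obtain ⟨_, h1, _, h2⟩ := hnonneg t ht; linarith
  -- key differential inequality for G
  have hkey : ∀ t ≥ (0:ℝ), g'fun t ≤ (lam (F t + Fw t) - μ) * (F t + Fw t) := by
    intro t ht
    obtain ⟨hM0, hF0, hMw0, hFw0⟩ := hnonneg t ht
    have hNpos := hN t ht
    have hlamt : 0 < lam (F t + Fw t) := hlampos _ (by linarith)
    have hr : 0 ≤ lam (F t + Fw t) / (M t + F t + Mw t + Fw t) :=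
      (div_pos hlamt hNpos).le
    have hb : (M t * F t + (1 - β) * (1 - τ) * (M t * Fw t + Mw t * Fw t) +
          (1 - q) * (Mw t * F t)) + (1 - β) * τ * (M t * Fw t + Mw t * Fw t)
        ≤ (M t + F t + Mw t + Fw t) * (F t + Fw t) := by
      nlinarith [mul_nonneg hq.1 (mul_nonneg hMw0 hF0),
        mul_nonneg hβ.1 (mul_nonneg (add_nonneg hM0 hMw0) hFw0),
        sq_nonneg (F t + Fw t)]
    have h2 := mul_le_mul_of_nonneg_left hb hr
    have h3 : lam (F t + Fw t) / (M t + F t + Mw t + Fw t) *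
        ((M t + F t + Mw t + Fw t) * (F t + Fw t)) =
        lam (F t + Fw t) * (F t + Fw t) := by
      field_simp
    have h4 : μ * F t ≤ μf * F t :=
      mul_le_mul_of_nonneg_right (min_le_left _ _) hF0
    have h5 : μ * Fw t ≤ μfw * Fw t :=
      mul_le_mul_of_nonneg_right (min_le_right _ _) hFw0
    simp only [hg'def]
    have hrw : (lam (F t + Fw t) - μ) * (F t + Fw t) =
        lam (F t + Fw t) * (F t + Fw t) - μ * F t - μ * Fw t := by ring
    rw [hrw]
    rw [h3] at h2
    ring_nf
    ring_nf at h2 h4 h5 ⊢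
    nlinarith [h2, h4, h5]
  -- boundedness of G
  set Kg : ℝ := max (F 0 + Fw 0) Fbar with hKgdef
  have hFbarKg : Fbar ≤ Kg := le_max_right _ _
  have hKg0 : 0 ≤ Kg := le_trans hFbar0 hFbarKg
  have hGzero : F 0 + Fw 0 ≤ Kg := le_max_left _ _
  have hGb : ∀ t ≥ (0:ℝ), F t + Fw t ≤ Kg := by
    refine barrier_lemma hGd hGzero ?_
    intro t ht hgt
    have hG0 := hGnonneg t ht
    have hlt : lam (F t + Fw t) < μ := by
      have := hanti hFbar0 (Set.mem_Ici.2 hG0) (lt_of_le_of_lt hFbarKg hgt)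
      rw [hFbarval] at this; exact this
    exact le_trans (hkey t ht) (mul_nonpos_of_nonpos_of_nonneg (by linarith) hG0)
  -- derivative of H = M + Mw
  set h'fun : ℝ → ℝ := fun t =>
    (-μm * M t + lam (F t + Fw t) / (M t + F t + Mw t + Fw t) *
        (M t * F t + (1 - β) * (1 - τ) * (M t * Fw t + Mw t * Fw t) +
          (1 - q) * (Mw t * F t))) +
    (-μmw * Mw t + lam (F t + Fw t) / (M t + F t + Mw t + Fw t) *
        ((1 - β) * τ * (1 - γ) * (M t * Fw t + Mw t * Fw t))) with hh'def
  have hHd : ∀ t ≥ (0:ℝ), HasDerivAt (fun s => M s + Mw s) (h'fun t) t :=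
    fun t ht => (hM t ht).add (hMw t ht)
  have hlam00 : 0 < lam 0 := hlampos 0 le_rfl
  have hkeyH : ∀ t ≥ (0:ℝ), h'fun t ≤ -μ' * (M t + Mw t) + 2 * lam 0 * Kg := by
    intro t ht
    obtain ⟨hM0, hF0, hMw0, hFw0⟩ := hnonneg t ht
    have hNpos := hN t ht
    have hG0 := hGnonneg t ht
    have hlamt : 0 < lam (F t + Fw t) := hlampos _ hG0
    have hr : 0 ≤ lam (F t + Fw t) / (M t + F t + Mw t + Fw t) :=
      (div_pos hlamt hNpos).le
    have hb : (M t * F t + (1 - β) * (1 - τ) * (M t * Fw t + Mw t * Fw t) +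
          (1 - q) * (Mw t * F t)) + (1 - β) * τ * (1 - γ) * (M t * Fw t + Mw t * Fw t)
        ≤ 2 * ((M t + F t + Mw t + Fw t) * (F t + Fw t)) := by
      nlinarith [mul_nonneg hq.1 (mul_nonneg hMw0 hF0),
        mul_nonneg hβ.1 (mul_nonneg (add_nonneg hM0 hMw0) hFw0),
        mul_nonneg (mul_nonneg (mul_nonneg (sub_nonneg.2 hβ.2) hτ.1) hγ.1)
          (mul_nonneg (add_nonneg hM0 hMw0) hFw0),
        mul_nonneg hτ.1 (mul_nonneg (add_nonneg hM0 hMw0) hFw0),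
        sq_nonneg (F t + Fw t), mul_nonneg hM0 hFw0, mul_nonneg hMw0 hFw0,
        mul_nonneg hM0 hF0, mul_nonneg hMw0 hF0]
    have h2 := mul_le_mul_of_nonneg_left hb hr
    have h3 : lam (F t + Fw t) / (M t + F t + Mw t + Fw t) *
        (2 * ((M t + F t + Mw t + Fw t) * (F t + Fw t))) =
        2 * (lam (F t + Fw t) * (F t + Fw t)) := by
      field_simp
    rw [h3] at h2
    have hlG : lam (F t + Fw t) * (F t + Fw t) ≤ lam 0 * Kg :=
      mul_le_mul (hmono (Set.mem_Ici.2 le_rfl) (Set.mem_Ici.2 hG0) hG0) (hGb t ht) hG0 hlam00.le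
    have h4 : μ' * M t ≤ μm * M t :=
      mul_le_mul_of_nonneg_right (min_le_left _ _) hM0
    have h5 : μ' * Mw t ≤ μmw * Mw t :=
      mul_le_mul_of_nonneg_right (min_le_right _ _) hMw0
    simp only [hh'def]
    ring_nf
    ring_nf at h2 h4 h5 hlG ⊢
    nlinarith [h2, h4, h5, hlG]
  -- boundedness of H
  set KH : ℝ := max (M 0 + Mw 0) (2 * lam 0 * Kg / μ') with hKHdef
  have hHb : ∀ t ≥ (0:ℝ), M t + Mw t ≤ KH := by
    refine barrier_lemma hHd (le_max_left _ _) ?_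
    intro t ht hgt
    have h1 : 2 * lam 0 * Kg / μ' < M t + Mw t := lt_of_le_of_lt (le_max_right _ _) hgt
    have h2 : 2 * lam 0 * Kg < μ' * (M t + Mw t) := by
      rw [div_lt_iff₀ hμ'pos] at h1; linarith [h1]
    linarith [hkeyH t ht]
  refine ⟨⟨Kg + KH, fun t ht => by linarith [hGb t ht, hHb t ht]⟩, hUnique, ?_,
    ⟨KH, hHb⟩⟩
  -- limsup part
  intro Fb hFb0 hFbval
  have hcob : IsCoboundedUnder (· ≤ ·) atTop (fun t => F t + Fw t) :=
    isCoboundedUnder_le_of_eventually_le atTop (x := 0)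
      (eventually_atTop.2 ⟨0, fun t ht => hGnonneg t ht⟩)
  refine le_of_forall_pos_le_add ?_
  intro ε hε
  have hexT : ∃ T ≥ (0:ℝ), F T + Fw T ≤ Fb + ε := by
    by_contra hcon
    push_neg at hcon
    have hlamlt : lam (Fb + ε) < μ := by
      have := hanti hFb0 (Set.mem_Ici.2 (by linarith : (0:ℝ) ≤ Fb + ε)) (by linarith)
      rw [hFbval] at this; exact this
    set c : ℝ := (μ - lam (Fb + ε)) * (Fb + ε) with hcdef
    have hc : 0 < c := mul_pos (by linarith) (by linarith)
    have hdec : ∀ t ≥ (0:ℝ), g'fun t ≤ -c := by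
      intro t ht
      have hG0 := hGnonneg t ht
      have hlt := hcon t ht
      have h1 : lam (F t + Fw t) ≤ lam (Fb + ε) :=
        hmono (Set.mem_Ici.2 (by linarith)) (Set.mem_Ici.2 hG0) hlt.le
      have h2 : (lam (F t + Fw t) - μ) * (F t + Fw t) ≤
          (lam (Fb + ε) - μ) * (F t + Fw t) :=
        mul_le_mul_of_nonneg_right (by linarith) hG0
      have h3 : (lam (Fb + ε) - μ) * (F t + Fw t) ≤
          (lam (Fb + ε) - μ) * (Fb + ε) :=
        mul_le_mul_of_nonpos_left hlt.le (by linarith)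
      have h4 : (lam (Fb + ε) - μ) * (Fb + ε) = -c := by rw [hcdef]; ring
      linarith [hkey t ht]
    have hdl := decay_lemma hGd hdec
    set b : ℝ := (F 0 + Fw 0 + 1) / c with hbdef
    have hb0 : 0 ≤ b := div_nonneg (by linarith [hGnonneg 0 le_rfl]) hc.le
    have := hdl b hb0
    have hcb : c * b = F 0 + Fw 0 + 1 := by
      rw [hbdef]; field_simp
    have := hGnonneg b hb0
    nlinarith [hdl b hb0, hGnonneg b hb0]
  obtain ⟨T, hT0', hTle⟩ := hexT
  have hafter : ∀ t ≥ T, F t + Fw t ≤ Fb + ε := by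
    refine barrier_lemma (fun t ht => hGd t (le_trans hT0' ht)) hTle ?_
    intro t ht hgt
    have ht0 : (0:ℝ) ≤ t := le_trans hT0' ht
    have hG0 := hGnonneg t ht0
    have hlt : lam (F t + Fw t) < μ := by
      have := hanti hFb0 (Set.mem_Ici.2 hG0) (by linarith)
      rw [hFbval] at this; exact this
    exact le_trans (hkey t ht0) (mul_nonpos_of_nonpos_of_nonneg (by linarith) hG0)
  exact limsup_le_of_le hcob (eventually_atTop.2 ⟨T, hafter⟩)
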